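/- (Concatenation discretization inequality) Let A₂ be nondecreasing, R₂ > 0, σ ≥ 0, τ > 0, γ' > 1, and define y₀ = 0, y_k = τ + γ'·y_{k−1}. Then inf_{s ≤ t}{ A₂(s) + max(R₂(t−s) − σ, 0) } ≥ inf_{k ≥ 1, y_k ≤ t or y_k ≥ t}{ A₂(t − y_k) + max( (R₂/γ')·y_k − (σ + (R₂/γ')·τ), 0 ) }, where A₂ is extended by A₂(s) = A₂(0) for s < 0. -/
import Mathlib


theorem stmt_15 (A₂ : ℝ → ℝ) (hA : Monotone A₂) (R₂ σ τ γ' t : ℝ)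
    (hR : 0 < R₂) (hσ : 0 ≤ σ) (hτ : 0 < τ) (hγ : 1 < γ') (ht : 0 ≤ t)
    (y : ℕ → ℝ) (hy0 : y 0 = 0) (hyrec : ∀ k, y (k + 1) = τ + γ' * y k) :
    (⨅ k : {k : ℕ // 1 ≤ k}, (A₂ (max (t - y (k : ℕ)) 0)
        + max (R₂ / γ' * y (k : ℕ) - (σ + R₂ / γ' * τ)) 0))
      ≤ ⨅ s : Set.Icc (0 : ℝ) t, (A₂ (s : ℝ) + max (R₂ * (t - (s : ℝ)) - σ) 0) := by
  have hγ0 : (0 : ℝ) < γ' := by linarith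
  have hynn : ∀ k, 0 ≤ y k := by
    intro k; induction k with
    | zero => simp [hy0]
    | succ n ih => rw [hyrec]; nlinarith
  have hyge : ∀ k : ℕ, (k : ℝ) * τ ≤ y k := by
    intro k; induction k with
    | zero => simp [hy0]
    | succ n ih => rw [hyrec]; push_cast; nlinarith [hynn n]
  have hbdd : BddBelow (Set.range fun k : {k : ℕ // 1 ≤ k} =>
      A₂ (max (t - y (k : ℕ)) 0) + max (R₂ / γ' * y (k : ℕ) - (σ + R₂ / γ' * τ)) 0) := by
    refine ⟨A₂ 0, ?_⟩
    rintro x ⟨k, rfl⟩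
    have h1 : A₂ 0 ≤ A₂ (max (t - y (k : ℕ)) 0) := hA (le_max_right _ _)
    have h2 : (0:ℝ) ≤ max (R₂ / γ' * y (k : ℕ) - (σ + R₂ / γ' * τ)) 0 := le_max_right _ _
    linarith
  haveI : Nonempty (Set.Icc (0:ℝ) t) := ⟨⟨0, le_refl 0, ht⟩⟩
  refine le_ciInf fun s => ?_
  obtain ⟨s, hs0, hst⟩ := s
  have hex : ∃ n : ℕ, t - s ≤ y (n + 1) := by
    obtain ⟨n, hn⟩ := exists_nat_ge (t / τ)
    refine ⟨n, ?_⟩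
    have h1 : ((n:ℝ) + 1) * τ ≤ y (n + 1) := by
      have := hyge (n + 1); push_cast at this ⊢; linarith
    have h2 : t ≤ (n : ℝ) * τ := by
      rw [div_le_iff₀ hτ] at hn; linarith
    nlinarith
  set n := Nat.find hex with hn
  have hyk : t - s ≤ y (n + 1) := Nat.find_spec hex
  have hyn : y n ≤ t - s := by
    rcases Nat.eq_zero_or_pos n with h | h
    · rw [h, hy0]; linarith
    · have := Nat.find_min hex (m := n - 1) (by omega)
      have hn1 : n - 1 + 1 = n := by omega
      rw [hn1] at this
      linarith [not_le.mp this]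
  refine ciInf_le_of_le hbdd ⟨n + 1, by omega⟩ ?_
  have hAle : A₂ (max (t - y (n + 1)) 0) ≤ A₂ s := hA (max_le (by linarith) hs0)
  have hkey : R₂ / γ' * y (n + 1) - (σ + R₂ / γ' * τ) = R₂ * y n - σ := by
    rw [hyrec]; field_simp; ring
  have hmax : max (R₂ / γ' * y (n + 1) - (σ + R₂ / γ' * τ)) 0
      ≤ max (R₂ * (t - s) - σ) 0 := by
    rw [hkey]
    exact max_le_max (by nlinarith) le_rfl
  simp only []
  linarith
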